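/- Let $1 < p \leq 2$ and let $x, y$ be positive reals with $y \geq x$. Then $x - (x+y)^p (2x+y)^{1-p} + y^p (x+y)^{1-p} \geq 0$. -/

import Mathlib

open Real

lemma base_ge_one' {t : ℝ} (ht0 : 0 < t) (ht : t < 1) :
    (1:ℝ) ≤ (1 + t) * (1 - t) ^ (1 - t) := by
  have h1t : (0:ℝ) < 1 - t := by linarith
  have hu : (-1:ℝ) ≤ t / (1 - t) := by
    have h : (0:ℝ) ≤ t / (1 - t) := by positivity
    linarith
  have hb := rpow_one_add_le_one_add_mul_self hu (by linarith : (0:ℝ) ≤ 1 - t)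
    (by linarith : (1:ℝ) - t ≤ 1)
  have he : (1:ℝ) + t / (1 - t) = (1 - t)⁻¹ := by field_simp; ring
  have he2 : (1:ℝ) + (1 - t) * (t / (1 - t)) = 1 + t := by field_simp
  rw [he, he2] at hb
  rw [Real.inv_rpow h1t.le] at hb
  have hpos : (0:ℝ) < (1 - t) ^ (1 - t) := Real.rpow_pos_of_pos h1t _
  rw [inv_le_iff_one_le_mul₀ hpos] at hb
  nlinarith [hb, hpos]

lemma key' {t r : ℝ} (ht0 : 0 < t) (ht : t < 1) (hr0 : 0 ≤ r) :
    (1 + t) ^ (-r) ≤ t + (1 - t) ^ (r + 1) := by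
  have h1t : (0:ℝ) < 1 - t := by linarith
  have h1pt : (0:ℝ) < 1 + t := by linarith
  have hApos : (0:ℝ) < (1 + t) ^ r := Real.rpow_pos_of_pos h1pt r
  have hBpos : (0:ℝ) < ((1 - t) * (1 + t)) ^ r := Real.rpow_pos_of_pos (by positivity) r
  have amgm := Real.geom_mean_le_arith_mean2_weighted ht0.le h1t.le hApos.le hBpos.le
    (by ring : t + (1 - t) = 1)
  have hgm : (1:ℝ) ≤ ((1 + t) ^ r) ^ t * (((1 - t) * (1 + t)) ^ r) ^ (1 - t) := by
    have e1 : ((1 + t) ^ r) ^ t = ((1 + t) ^ t) ^ r := by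
      rw [← Real.rpow_mul h1pt.le, mul_comm r t, Real.rpow_mul h1pt.le]
    have e2 : (((1 - t) * (1 + t)) ^ r) ^ (1 - t) = (((1 - t) * (1 + t)) ^ (1 - t)) ^ r := by
      rw [← Real.rpow_mul (by positivity : (0:ℝ) ≤ (1-t)*(1+t)), mul_comm r (1-t),
        Real.rpow_mul (by positivity : (0:ℝ) ≤ (1-t)*(1+t))]
    rw [e1, e2, ← Real.mul_rpow (by positivity) (by positivity)]
    have e3 : (1 + t) ^ t * ((1 - t) * (1 + t)) ^ (1 - t)
        = ((1 + t) * (1 - t) ^ (1 - t)) := by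
      rw [Real.mul_rpow h1t.le h1pt.le, ← mul_assoc, mul_comm ((1+t:ℝ)^t),
        mul_assoc, mul_comm ((1+t:ℝ)^t), ← Real.rpow_add h1pt]
      ring_nf
      rw [Real.rpow_one]
      ring
    rw [e3]
    calc (1:ℝ) = 1 ^ r := (Real.one_rpow r).symm
      _ ≤ _ := Real.rpow_le_rpow (by norm_num) (base_ge_one' ht0 ht) hr0
  have hBsplit : (1 - t) * ((1 - t) * (1 + t)) ^ r = (1 - t) ^ (r + 1) * (1 + t) ^ r := by
    rw [Real.mul_rpow h1t.le h1pt.le, Real.rpow_add_one h1t.ne' r]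
    ring
  have h1 : (1:ℝ) ≤ (t + (1 - t) ^ (r + 1)) * (1 + t) ^ r := by
    have := le_trans hgm amgm
    rw [hBsplit] at this
    nlinarith [this]
  rw [Real.rpow_neg h1pt.le, inv_le_iff_one_le_mul₀ hApos]
  nlinarith [h1]

/-- Homogeneous form: for `1 < p ≤ 2` and positive reals `x ≤ y`,
`x - (x+y)^p (2x+y)^(1-p) + y^p (x+y)^(1-p) ≥ 0`. -/
theorem ineq_xy (p : ℝ) (hp1 : 1 < p) (hp2 : p ≤ 2) (x y : ℝ)
    (hx : 0 < x) (hy : 0 < y) (hxy : x ≤ y) :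
    0 ≤ x - (x + y) ^ p * (2 * x + y) ^ (1 - p) + y ^ p * (x + y) ^ (1 - p) := by
  have hs : (0:ℝ) < x + y := by linarith
  set t : ℝ := x / (x + y) with htdef
  have ht0 : 0 < t := by positivity
  have ht1 : t < 1 := by rw [htdef, div_lt_one hs]; linarith
  have hk := key' (r := p - 1) ht0 ht1 (by linarith)
  rw [show -(p-1) = 1-p by ring, show p-1+1 = p by ring] at hk
  have hin : 0 ≤ t - (1+t)^(1-p) + (1-t)^p := by linarith
  have ex : x = (x+y) * t := by rw [htdef]; field_simp
  have e2xy : 2*x + y = (x+y) * (1+t) := by rw [htdef]; field_simp; ring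
  have ey : y = (x+y) * (1-t) := by rw [htdef]; field_simp; ring
  have h1 : (x+y)^p * (2*x+y)^(1-p) = (x+y) * (1+t)^(1-p) := by
    rw [e2xy, Real.mul_rpow hs.le (by linarith : (0:ℝ) ≤ 1+t), ← mul_assoc,
      ← Real.rpow_add hs]
    norm_num
  have hyp : y ^ p = (x+y)^p * (1-t)^p := by
    rw [← Real.mul_rpow hs.le (by linarith : (0:ℝ) ≤ 1-t), ← ey]
  have h2 : y^p * (x+y)^(1-p) = (x+y) * (1-t)^p := by
    rw [hyp, mul_right_comm, ← Real.rpow_add hs]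
    norm_num
  rw [h1, h2]
  nlinarith [mul_nonneg hs.le hin, ex]
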